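/- Let 𝔽 be ℝ or ℂ and let D ∈ 𝔽^{d×n} be a dictionary of full row rank. If A ∈ 𝔽^{m×d} satisfies the strong D-null space property of order s (with some constant c > 0), and v is any column of D, then A satisfies the strong [D, v]-null space property of the same order s (with the same constant c), where [D, v] is the d×(n+1) matrix obtained by appending the column v to D. -/

import Mathlib

open scoped BigOperators

section Defs

variable {𝕜 : Type*}

/-- ℓ¹ norm of a finitely-indexed vector. -/
noncomputable def norm1 [RCLike 𝕜] {ι : Type*} [Fintype ι] (x : ι → 𝕜) : ℝ :=
  ∑ i, ‖x i‖

/-- ℓ² norm of a finitely-indexed vector. -/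
noncomputable def norm2 [RCLike 𝕜] {ι : Type*} [Fintype ι] (x : ι → 𝕜) : ℝ :=
  Real.sqrt (∑ i, ‖x i‖ ^ 2)

/-- Restriction of a vector to an index set `T` (zero outside `T`). -/
def restr [Zero 𝕜] {ι : Type*} [DecidableEq ι] (T : Finset ι) (x : ι → 𝕜) : ι → 𝕜 :=
  fun i => if i ∈ T then x i else 0

/-- `x` has at most `s` nonzero entries. -/
def sparse [Zero 𝕜] {ι : Type*} (s : ℕ) (x : ι → 𝕜) : Prop :=
  {i | x i ≠ 0}.ncard ≤ s

/-- Null space property of order `s`. -/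
def NSP [RCLike 𝕜] {m : ℕ} {ι : Type*} [Fintype ι] [DecidableEq ι]
    (M : Matrix (Fin m) ι 𝕜) (s : ℕ) : Prop :=
  ∀ v : ι → 𝕜, M.mulVec v = 0 → v ≠ 0 →
    ∀ T : Finset ι, T.card ≤ s → norm1 (restr T v) < norm1 (restr Tᶜ v)

/-- `D`-null space property of order `s`. -/
def DNSP [RCLike 𝕜] {m d : ℕ} {ι : Type*} [Fintype ι] [DecidableEq ι]
    (A : Matrix (Fin m) (Fin d) 𝕜) (D : Matrix (Fin d) ι 𝕜) (s : ℕ) : Prop :=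
  ∀ T : Finset ι, T.card ≤ s →
    ∀ v : ι → 𝕜, A.mulVec (D.mulVec v) = 0 → D.mulVec v ≠ 0 →
      ∃ u : ι → 𝕜, D.mulVec u = 0 ∧ norm1 (restr T v + u) < norm1 (restr Tᶜ v)

/-- Strong `D`-null space property of order `s` with constant `c`. -/
def SNSPc [RCLike 𝕜] {m d : ℕ} {ι : Type*} [Fintype ι] [DecidableEq ι]
    (A : Matrix (Fin m) (Fin d) 𝕜) (D : Matrix (Fin d) ι 𝕜) (s : ℕ) (c : ℝ) : Prop :=
  ∀ v : ι → 𝕜, A.mulVec (D.mulVec v) = 0 →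
    ∀ T : Finset ι, T.card ≤ s →
      ∃ u : ι → 𝕜, D.mulVec u = 0 ∧
        c * norm2 (D.mulVec v) ≤ norm1 (restr Tᶜ v) - norm1 (restr T v + u)

/-- Smallest positive singular value of a matrix: the infimum of the set of positive `σ`
such that `σ²` is an eigenvalue of `Mᴴ M`. -/
noncomputable def nuSV [RCLike 𝕜] {κ ι : Type*} [Fintype κ] [Fintype ι]
    (M : Matrix κ ι 𝕜) : ℝ :=
  sInf {σ : ℝ | 0 < σ ∧ ∃ v : ι → 𝕜, v ≠ 0 ∧ (M.conjTranspose * M).mulVec v = ((σ : 𝕜) ^ 2) • v}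

/-- ℓ¹ error of the best `s`-term approximation. -/
noncomputable def sigmaS [RCLike 𝕜] {ι : Type*} [Fintype ι] (s : ℕ) (x : ι → 𝕜) : ℝ :=
  sInf {r : ℝ | ∃ v : ι → 𝕜, sparse s v ∧ r = norm1 (x - v)}

/-- Spectral norm (ℓ² → ℓ² operator norm). -/
noncomputable def specNorm [RCLike 𝕜] {m d : ℕ} (A : Matrix (Fin m) (Fin d) 𝕜) : ℝ :=
  sSup {r : ℝ | ∃ x : Fin d → 𝕜, norm2 x ≤ 1 ∧ r = norm2 (A.mulVec x)}

/-- ℓ¹ → ℓ² operator norm: the maximal ℓ² norm of a column. -/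
noncomputable def norm12 [RCLike 𝕜] {d : ℕ} {ι : Type*} [Fintype ι]
    (M : Matrix (Fin d) ι 𝕜) : ℝ :=
  sSup {r : ℝ | ∃ j : ι, r = norm2 (fun i => M i j)}

end Defs

/-- appending a repeated column to `D` preserves the strong `D`-null space
property, with the same order and constant. -/
theorem stmt6 {𝕜 : Type*} [RCLike 𝕜] {m d n s : ℕ}
    (A : Matrix (Fin m) (Fin d) 𝕜) (D : Matrix (Fin d) (Fin n) 𝕜)
    (hD : Function.Surjective D.mulVec)
    (c : ℝ) (hc : 0 < c) (hSNSP : SNSPc A D s c) (j₀ : Fin n) :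
    SNSPc A (Matrix.of fun i => Fin.snoc (fun j => D i j) (D i j₀)) s c := by
  classical
  intro v hAv T hT
  set D' : Matrix (Fin d) (Fin (n+1)) 𝕜 :=
    Matrix.of fun i => Fin.snoc (fun j => D i j) (D i j₀) with hD'
  set b : 𝕜 := v (Fin.last n) with hbdef
  set w : Fin n → 𝕜 := fun j => v j.castSucc + if j = j₀ then b else 0 with hwdef
  have hDw : D.mulVec w = D'.mulVec v := by
    funext i
    simp only [Matrix.mulVec, dotProduct, hD']
    rw [Fin.sum_univ_castSucc]
    simp only [Matrix.of_apply, Fin.snoc_castSucc, Fin.snoc_last, hwdef,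
      mul_add, Finset.sum_add_distrib, mul_ite, mul_zero, Finset.sum_ite_eq',
      Finset.mem_univ, if_true, hbdef]
  have hAw : A.mulVec (D.mulVec w) = 0 := by rw [hDw]; exact hAv
  set P : Finset (Fin n) := Finset.univ.filter (fun j => j.castSucc ∈ T) with hPdef
  set T' : Finset (Fin n) := if Fin.last n ∈ T then insert j₀ P else P with hT'def
  have hPcard : P.card ≤ T.card := by
    apply Finset.card_le_card_of_injOn (fun j => j.castSucc)
    · intro j hj; simpa [hPdef] using hj
    · intro x _ y _ h; exact Fin.castSucc_injective n h
  have hT'card : T'.card ≤ s := by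
    by_cases hl : Fin.last n ∈ T
    · have h1 : P.card ≤ (T.erase (Fin.last n)).card := by
        apply Finset.card_le_card_of_injOn (fun j => j.castSucc)
        · intro j hj
          refine Finset.mem_erase.2 ⟨?_, by simpa [hPdef] using hj⟩
          exact (Fin.castSucc_lt_last j).ne
        · intro x _ y _ h; exact Fin.castSucc_injective n h
      rw [Finset.card_erase_of_mem hl] at h1
      have h2 : T'.card ≤ P.card + 1 := by
        rw [hT'def, if_pos hl]; exact Finset.card_insert_le _ _
      have h3 : 1 ≤ T.card := Finset.card_pos.2 ⟨_, hl⟩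
      omega
    · rw [hT'def, if_neg hl]; exact le_trans hPcard hT
  obtain ⟨u, hu, hineq⟩ := hSNSP w hAw T' hT'card
  set β : 𝕜 := if Fin.last n ∈ T then b else 0 with hβdef
  set u' : Fin (n+1) → 𝕜 :=
    Fin.snoc (fun j => u j + if j = j₀ then β else 0) (-β) with hu'def
  refine ⟨u', ?_, ?_⟩
  · funext i
    have h0 : D.mulVec u i = 0 := by rw [hu]; rfl
    simp only [Matrix.mulVec, dotProduct, hD'] at h0 ⊢
    rw [Fin.sum_univ_castSucc]
    simp only [Matrix.of_apply, Fin.snoc_castSucc, Fin.snoc_last, hu'def,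
      mul_add, Finset.sum_add_distrib, mul_ite, mul_zero, Finset.sum_ite_eq',
      Finset.mem_univ, if_true, Pi.zero_apply]
    rw [h0]; ring
  · have hnorm2 : norm2 (D'.mulVec v) = norm2 (D.mulVec w) := by rw [hDw]
    rw [hnorm2]
    refine le_trans hineq ?_
    have hjT' : ∀ j : Fin n, j ≠ j₀ → (j ∈ T' ↔ j.castSucc ∈ T) := by
      intro j hj
      by_cases hl : Fin.last n ∈ T
      · rw [hT'def, if_pos hl]
        simp [Finset.mem_insert, hj, hPdef]
      · rw [hT'def, if_neg hl]; simp [hPdef]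
    have e1 : norm1 (restr Tᶜ v) =
        (∑ j : Fin n, ‖restr Tᶜ v j.castSucc‖) + ‖restr Tᶜ v (Fin.last n)‖ :=
      Fin.sum_univ_castSucc _
    have e2 : norm1 (restr T v + u') =
        (∑ j : Fin n, ‖restr T v j.castSucc + u' j.castSucc‖)
          + ‖restr T v (Fin.last n) + u' (Fin.last n)‖ :=
      Fin.sum_univ_castSucc _
    rw [e1, e2]
    simp only [norm1, Pi.add_apply]
    have hAC : ∀ j ∈ Finset.univ.erase j₀,
        ‖restr T'ᶜ w j‖ = ‖restr Tᶜ v j.castSucc‖ := by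
      intro j hj
      have hj0 : j ≠ j₀ := (Finset.mem_erase.1 hj).1
      have hwj : w j = v j.castSucc := by simp [hwdef, hj0]
      simp [restr, Finset.mem_compl, hjT' j hj0, hwj]
    have hEB : ∀ j ∈ Finset.univ.erase j₀,
        ‖restr T v j.castSucc + u' j.castSucc‖ = ‖restr T' w j + u j‖ := by
      intro j hj
      have hj0 : j ≠ j₀ := (Finset.mem_erase.1 hj).1
      have hwj : w j = v j.castSucc := by simp [hwdef, hj0]
      have hu'j : u' j.castSucc = u j := by simp [hu'def, hj0]
      simp [restr, hjT' j hj0, hwj, hu'j]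
    have hsplitA : ∀ f : Fin n → ℝ,
        ∑ j, f j = f j₀ + ∑ j ∈ Finset.univ.erase j₀, f j := by
      intro f; rw [Finset.add_sum_erase _ f (Finset.mem_univ j₀)]
    rw [hsplitA (fun j => ‖restr T'ᶜ w j‖),
        hsplitA (fun j => ‖restr T' w j + u j‖),
        hsplitA (fun j => ‖restr Tᶜ v j.castSucc‖),
        hsplitA (fun j => ‖restr T v j.castSucc + u' j.castSucc‖)]
    rw [Finset.sum_congr rfl hAC, Finset.sum_congr rfl hEB]
    have hu'cs : u' j₀.castSucc = u j₀ + β := by simp [hu'def]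
    have hu'last : u' (Fin.last n) = -β := by simp [hu'def]
    have hwj₀ : w j₀ = v j₀.castSucc + b := by simp [hwdef]
    set a : 𝕜 := v j₀.castSucc with hadef
    set t : 𝕜 := u j₀ with htdef
    have hscalar :
        ‖restr T'ᶜ w j₀‖ + (‖restr T v j₀.castSucc + u' j₀.castSucc‖
            + ‖restr T v (Fin.last n) + u' (Fin.last n)‖)
        ≤ ‖restr Tᶜ v j₀.castSucc‖ + ‖restr Tᶜ v (Fin.last n)‖
            + ‖restr T' w j₀ + u j₀‖ := by
      by_cases hl : Fin.last n ∈ T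
      · have hβb : β = b := by rw [hβdef, if_pos hl]
        have hj₀T' : j₀ ∈ T' := by
          rw [hT'def, if_pos hl]; exact Finset.mem_insert_self _ _
        have hA0 : restr T'ᶜ w j₀ = 0 := by simp [restr, Finset.mem_compl, hj₀T']
        have hcL : restr Tᶜ v (Fin.last n) = 0 := by
          simp [restr, Finset.mem_compl, hl]
        have heL : restr T v (Fin.last n) + u' (Fin.last n) = 0 := by
          rw [hu'last, hβb]; simp [restr, hl, ← hbdef]
        have hB0 : restr T' w j₀ = a + b := by rw [← hwj₀]; simp [restr, hj₀T']
        by_cases hj : j₀.castSucc ∈ T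
        · have hC0 : restr Tᶜ v j₀.castSucc = 0 := by
            simp [restr, Finset.mem_compl, hj]
          have hE0 : restr T v j₀.castSucc = a := by simp [restr, hj, hadef]
          rw [hA0, hcL, heL, hB0, hC0, hE0, hu'cs, hβb]
          simp only [norm_zero, add_zero, zero_add]
          exact le_of_eq (congrArg norm (by ring))
        · have hC0 : restr Tᶜ v j₀.castSucc = a := by
            simp [restr, Finset.mem_compl, hj, hadef]
          have hE0 : restr T v j₀.castSucc = 0 := by simp [restr, hj]
          rw [hA0, hcL, heL, hB0, hC0, hE0, hu'cs, hβb]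
          simp only [norm_zero, add_zero, zero_add]
          rw [htdef]
          have h2 := norm_sub_le (a + b + u j₀) a
          have h1 : a + b + u j₀ - a = u j₀ + b := by ring
          rw [h1] at h2
          linarith
      · have hβ0 : β = 0 := by rw [hβdef, if_neg hl]
        have hcL : restr Tᶜ v (Fin.last n) = b := by
          simp [restr, Finset.mem_compl, hl, ← hbdef]
        have heL : restr T v (Fin.last n) + u' (Fin.last n) = 0 := by
          rw [hu'last, hβ0]; simp [restr, hl]
        by_cases hj : j₀.castSucc ∈ T
        · have hj₀T' : j₀ ∈ T' := by
            rw [hT'def, if_neg hl]; simp [hPdef, hj]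
          have hA0 : restr T'ᶜ w j₀ = 0 := by
            simp [restr, Finset.mem_compl, hj₀T']
          have hB0 : restr T' w j₀ = a + b := by
            rw [← hwj₀]; simp [restr, hj₀T']
          have hC0 : restr Tᶜ v j₀.castSucc = 0 := by
            simp [restr, Finset.mem_compl, hj]
          have hE0 : restr T v j₀.castSucc = a := by simp [restr, hj, hadef]
          rw [hA0, hcL, heL, hB0, hC0, hE0, hu'cs, hβ0]
          simp only [norm_zero, add_zero, zero_add]
          rw [htdef]
          have h2 := norm_sub_le (a + b + u j₀) b
          have h1 : a + b + u j₀ - b = a + u j₀ := by ring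
          rw [h1] at h2
          linarith
        · have hj₀T' : j₀ ∉ T' := by
            rw [hT'def, if_neg hl]; simp [hPdef, hj]
          have hA0 : restr T'ᶜ w j₀ = a + b := by
            rw [← hwj₀]; simp [restr, Finset.mem_compl, hj₀T']
          have hB0 : restr T' w j₀ = 0 := by simp [restr, hj₀T']
          have hC0 : restr Tᶜ v j₀.castSucc = a := by
            simp [restr, Finset.mem_compl, hj, hadef]
          have hE0 : restr T v j₀.castSucc = 0 := by simp [restr, hj]
          rw [hA0, hcL, heL, hB0, hC0, hE0, hu'cs, hβ0]
          simp only [norm_zero, add_zero, zero_add]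
          rw [htdef]
          have h1 : ‖a + b‖ ≤ ‖a‖ + ‖b‖ := norm_add_le _ _
          linarith
    linarith [hscalar]
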